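/- Suppose f : [ℕ]^{<ω} → {0,1} is eventually constant with limit f̄, and suppose that f̄(X) ≠ f̄(X⁻) holds for every infinite X ⊆ ℕ (where X⁻ = X \ {min X}). Then a contradiction follows. Concretely: choose (by eventual constancy) a finite s ⊆ ℕ with f(s) = f(t) for all finite t ⊃ s having s as proper initial segment; let j = |s|, V = s ∪ (ℕ/s), W = s ∪ (ℕ/s)⁻. Then f̄(V) = f̄(W), yet the hypothesis forces f̄(V^{−j}) and f̄(W^{−j}) to differ in a way incompatible with V^{−j} = ℕ/s and W^{−j} = (ℕ/s)⁻, yielding f̄(ℕ/s) = 1 − f̄(ℕ/s), a contradiction. Formally: there is no eventually constant f : [ℕ]^{<ω} → {0,1} whose limit f̄ satisfies f̄(X) ≠ f̄(X⁻) for all infinite X. -/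

import Mathlib

/-- `seg X n` is the set of the `n` smallest elements of `X`. -/
noncomputable def seg (X : Set ℕ) (n : ℕ) : Finset ℕ :=
  (Finset.range n).image (Nat.nth (· ∈ X))

/-- `f` is eventually constant. -/
def EvConst {Q : Type*} (f : Finset ℕ → Q) : Prop :=
  ∀ X : Set ℕ, X.Infinite → ∃ N, ∀ n > N, f (seg X n) = f (seg X N)

/-- `fbar` is the limit function of `f`. -/
def IsLimit {Q : Type*} (f : Finset ℕ → Q) (fbar : Set ℕ → Q) : Prop :=
  ∀ X : Set ℕ, X.Infinite → ∃ N, ∀ n ≥ N, f (seg X n) = fbar X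

/-- `s` is a proper initial segment of `t`. -/
def PInitSeg (s t : Finset ℕ) : Prop :=
  s ⊆ t ∧ s.card < t.card ∧ ∀ x ∈ s, ∀ y ∈ t, y ∉ s → x < y

/-- `X⁻ = X \ {min X}`. -/
def dropMin (X : Set ℕ) : Set ℕ := X \ {sInf X}

/-- `X^{-i}`: `X` without its `i` smallest elements. -/
def dropIter (i : ℕ) (X : Set ℕ) : Set ℕ := dropMin^[i] X

/-- `Z/s`: elements of `Z` above all elements of `s`. -/
def after (Z : Set ℕ) (s : Finset ℕ) : Set ℕ := {n ∈ Z | ∀ m ∈ s, m < n}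

/-- `Y` is a cofinite subset of `X`. -/
def Cofin (Y X : Set ℕ) : Prop := Y ⊆ X ∧ (X \ Y).Finite

open Classical in
lemma seg_card {X : Set ℕ} (hX : X.Infinite) (n : ℕ) : (seg X n).card = n := by
  rw [seg, Finset.card_image_of_injective _ (Nat.nth_injective (p := (· ∈ X)) hX),
    Finset.card_range]

lemma seg_subset {X : Set ℕ} (hX : X.Infinite) (n : ℕ) : ∀ y ∈ seg X n, y ∈ X := by
  intro y hy
  rw [seg, Finset.mem_image] at hy
  obtain ⟨i, -, rfl⟩ := hy
  exact Nat.nth_mem_of_infinite hX i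

lemma seg_mono (X : Set ℕ) {n m : ℕ} (h : n ≤ m) : seg X n ⊆ seg X m :=
  Finset.image_subset_image (Finset.range_subset_range.2 h)

/-- Key lemma: if `s ⊆ X` and every element of `s` is below every element of
`X \ s`, then `s` is the set of the `s.card` smallest elements of `X`. -/
lemma seg_eq_of {X : Set ℕ} (hX : X.Infinite) (s : Finset ℕ)
    (hs : ∀ x ∈ s, x ∈ X) (hlt : ∀ x ∈ s, ∀ y, y ∈ X → y ∉ s → x < y) :
    seg X s.card = s := by
  classical
  have hcard := seg_card hX s.card
  refine Finset.eq_of_subset_of_card_le (fun y hy => ?_) hcard.ge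
  by_contra hys
  rw [seg, Finset.mem_image] at hy
  obtain ⟨i, hi, rfl⟩ := hy
  rw [Finset.mem_range] at hi
  set y := Nat.nth (· ∈ X) i with hy
  have hyX : y ∈ X := Nat.nth_mem_of_infinite hX i
  have hcount : ∀ x ∈ s, Nat.count (· ∈ X) x < i := by
    intro x hx
    have hxy : x < y := hlt x hx y hyX hys
    have h2 := Nat.count_strict_mono (p := (· ∈ X)) (hs x hx) hxy
    have h3 := Nat.count_nth_of_infinite (p := (· ∈ X)) hX i
    rw [← hy] at h3
    omega
  have hinj : Set.InjOn (Nat.count (· ∈ X)) s := by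
    intro a ha b hb hab
    exact Nat.count_injective (hs a ha) (hs b hb) hab
  have : (s.image (Nat.count (· ∈ X))).card ≤ i := by
    have hsub2 : s.image (Nat.count (· ∈ X)) ⊆ Finset.range i := by
      intro c hc
      rw [Finset.mem_image] at hc
      obtain ⟨x, hx, rfl⟩ := hc
      exact Finset.mem_range.2 (hcount x hx)
    have := Finset.card_le_card hsub2
    rwa [Finset.card_range] at this
  rw [Finset.card_image_of_injOn hinj] at this
  omega

lemma dropMin_infinite {X : Set ℕ} (hX : X.Infinite) : (dropMin X).Infinite :=
  hX.diff (Set.finite_singleton _)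

lemma dropIter_infinite (i : ℕ) {X : Set ℕ} (hX : X.Infinite) : (dropIter i X).Infinite := by
  induction i generalizing X with
  | zero => exact hX
  | succ n ih =>
    rw [dropIter, Function.iterate_succ, Function.comp_apply]
    exact ih (dropMin_infinite hX)

lemma dropIter_union (s : Finset ℕ) (Z : Set ℕ) (hZ : Z.Infinite)
    (h : ∀ x ∈ s, ∀ z ∈ Z, x < z) : dropIter s.card (↑s ∪ Z) = Z := by
  classical
  obtain ⟨n, hn⟩ : ∃ n, s.card = n := ⟨_, rfl⟩
  induction n generalizing s with
  | zero =>
    rw [Finset.card_eq_zero] at hn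
    subst hn
    simp [dropIter]
  | succ n ih =>
    have hne : s.Nonempty := Finset.card_pos.1 (by omega)
    set m := s.min' hne with hm
    have hmem : m ∈ s := s.min'_mem hne
    have hmZ : m ∉ Z := fun hmZ => lt_irrefl m (h m hmem m hmZ)
    have hInf : sInf (↑s ∪ Z) = m := by
      apply le_antisymm
      · exact Nat.sInf_le (Or.inl hmem)
      · have hne' : (↑s ∪ Z : Set ℕ).Nonempty := ⟨m, Or.inl hmem⟩
        rcases Nat.sInf_mem hne' with hs' | hz'
        · exact s.min'_le _ hs'
        · exact (h m hmem _ hz').le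
    have hdrop : dropMin (↑s ∪ Z) = ↑(s.erase m) ∪ Z := by
      rw [dropMin, hInf]
      ext x
      simp only [Set.mem_diff, Set.mem_union, Finset.coe_erase, Set.mem_singleton_iff,
        Finset.mem_coe, Set.mem_diff]
      constructor
      · rintro ⟨hx | hx, hxm⟩
        · exact Or.inl ⟨hx, hxm⟩
        · exact Or.inr hx
      · rintro (⟨hx, hxm⟩ | hx)
        · exact ⟨Or.inl hx, hxm⟩
        · exact ⟨Or.inr hx, fun hxm => hmZ (hxm ▸ hx)⟩
    have : dropIter (n + 1) (↑s ∪ Z) = dropIter n (↑(s.erase m) ∪ Z) := by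
      rw [dropIter, dropIter, Function.iterate_succ, Function.comp_apply, hdrop]
    have hcard' : (s.erase m).card = n := by
      rw [Finset.card_erase_of_mem hmem, hn]; omega
    rw [hn, this, ← hcard']
    exact ih (s.erase m) (fun x hx z hz => h x (Finset.mem_of_mem_erase hx) z hz) hcard'

theorem stmt12 :
    ¬ ∃ (f : Finset ℕ → Fin 2) (fbar : Set ℕ → Fin 2),
      EvConst f ∧ IsLimit f fbar ∧
      ∀ X : Set ℕ, X.Infinite → fbar X ≠ fbar (dropMin X) := by
  rintro ⟨f, fbar, hEC, hLim, hAlt⟩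
  classical
  -- Step 1: find s with f constant on proper initial-segment extensions of s
  have hstep : ∃ s : Finset ℕ, ∀ t : Finset ℕ, PInitSeg s t → f t = f s := by
    by_contra hno
    push_neg at hno
    choose g hg1 hg2 using hno
    -- build increasing chain
    let S : ℕ → Finset ℕ := fun k => Nat.rec (∅ : Finset ℕ) (fun _ s => g s) k
    have hSsucc : ∀ k, S (k + 1) = g (S k) := fun k => rfl
    have hchain : ∀ k, PInitSeg (S k) (S (k + 1)) := fun k => hg1 (S k)
    have hsub : ∀ k l, k ≤ l → S k ⊆ S l := by
      intro k l
      induction l with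
      | zero => intro hkl; rw [Nat.le_zero.1 hkl]
      | succ n ih =>
        intro hkl
        rcases Nat.lt_succ_iff_lt_or_eq.1 (Nat.lt_succ_of_le hkl) with h | h
        · exact (ih (Nat.lt_succ_iff.1 h)).trans (hchain n).1
        · exact h ▸ Finset.Subset.refl _
    have hcardlt : ∀ k, (S k).card < (S (k+1)).card := fun k => (hchain k).2.1
    have hcardge : ∀ k, k ≤ (S k).card := by
      intro k
      induction k with
      | zero => exact Nat.zero_le _
      | succ n ih => exact Nat.lt_of_le_of_lt ih (hcardlt n)
    have horder : ∀ k l, k ≤ l → ∀ x ∈ S k, ∀ y ∈ S l, y ∉ S k → x < y := by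
      intro k l
      induction l with
      | zero =>
        intro hkl x hx y hy hyn
        exact absurd (Nat.le_zero.1 hkl ▸ hy) hyn
      | succ n ih =>
        intro hkl x hx y hy hyn
        rcases Nat.lt_succ_iff_lt_or_eq.1 (Nat.lt_succ_of_le hkl) with h | h
        · have hkn : k ≤ n := Nat.lt_succ_iff.1 h
          rcases Classical.em (y ∈ S n) with hyS | hyS
          · exact ih hkn x hx y hyS hyn
          · exact (hchain n).2.2 x (hsub k n hkn hx) y hy hyS
        · exact absurd (h ▸ hy) hyn
    set X : Set ℕ := {x : ℕ | ∃ k, x ∈ S k} with hX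
    have hmemX : ∀ k, ∀ x ∈ S k, x ∈ X := by
      intro k x hx
      exact ⟨k, hx⟩
    have hXinf : X.Infinite := by
      intro hF
      have : ∀ k, (S k).card ≤ hF.toFinset.card := by
        intro k
        apply Finset.card_le_card
        intro x hx
        exact hF.mem_toFinset.2 (hmemX k x hx)
      have h1 := this (hF.toFinset.card + 1)
      have h2 := hcardge (hF.toFinset.card + 1)
      omega
    have hSseg : ∀ k, seg X (S k).card = S k := by
      intro k
      apply seg_eq_of hXinf
      · exact hmemX k
      · intro x hx y hyX hyS
        obtain ⟨l, hyl⟩ := hyX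
        rcases le_total l k with h | h
        · exact absurd (hsub l k h hyl) hyS
        · exact horder k l h x hx y hyl hyS
    obtain ⟨N, hN⟩ := hEC X hXinf
    set k := N + 1
    have h1 : f (seg X (S k).card) = f (seg X N) := hN _ (by have := hcardge k; omega)
    have h2 : f (seg X (S (k+1)).card) = f (seg X N) := by
      apply hN
      have := hcardge k
      have := hcardlt k
      omega
    rw [hSseg k] at h1
    rw [hSseg (k+1)] at h2
    have : f (S (k+1)) = f (S k) := by rw [h1, h2]
    exact hg2 (S k) (hSsucc k ▸ this)
  obtain ⟨s, hs⟩ := hstep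
  set j := s.card with hj
  -- Z = naturals above all of s
  set Z : Set ℕ := {n : ℕ | ∀ m ∈ s, m < n} with hZ
  have hZinf : Z.Infinite := by
    apply Set.Infinite.mono (s := Set.Ioi (s.sup id))
    · intro n hn m hm
      exact lt_of_le_of_lt (Finset.le_sup (f := id) hm) hn
    · exact Set.Ioi_infinite _
  have hZ'inf : (dropMin Z).Infinite := dropMin_infinite hZinf
  -- key: for any infinite Y with all elements above s, fbar (↑s ∪ Y) = f s
  have hkey : ∀ Y : Set ℕ, Y.Infinite → (∀ x ∈ s, ∀ z ∈ Y, x < z) →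
      fbar (↑s ∪ Y) = f s := by
    intro Y hYinf habove
    set V : Set ℕ := ↑s ∪ Y with hV
    have hVinf : V.Infinite := hYinf.mono Set.subset_union_right
    have hsV : ∀ x ∈ s, x ∈ V := fun x hx => Or.inl hx
    have horderV : ∀ x ∈ s, ∀ y, y ∈ V → y ∉ s → x < y := by
      rintro x hx y (hy | hy) hys
      · exact absurd hy hys
      · exact habove x hx y hy
    have hsegj : seg V j = s := seg_eq_of hVinf s hsV horderV
    obtain ⟨N, hN⟩ := hLim V hVinf
    set n := max N (j + 1) with hn
    have h1 : f (seg V n) = fbar V := hN n (le_max_left _ _)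
    have h2 : PInitSeg s (seg V n) := by
      refine ⟨?_, ?_, ?_⟩
      · rw [← hsegj]
        exact seg_mono V (by omega)
      · rw [seg_card hVinf n, ← hj]
        omega
      · intro x hx y hy hys
        exact horderV x hx y (seg_subset hVinf n y hy) hys
    rw [hs _ h2] at h1
    exact h1.symm
  have habove1 : ∀ x ∈ s, ∀ z ∈ Z, x < z := fun x hx z hz => hz x hx
  have habove2 : ∀ x ∈ s, ∀ z ∈ dropMin Z, x < z :=
    fun x hx z hz => habove1 x hx z hz.1
  have hV : fbar (↑s ∪ Z) = f s := hkey Z hZinf habove1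
  have hW : fbar (↑s ∪ dropMin Z) = f s := hkey (dropMin Z) hZ'inf habove2
  -- fbar of dropIter
  open Fin.NatCast in
  have hiter : ∀ i (X : Set ℕ), X.Infinite → fbar (dropIter i X) = fbar X + (i : Fin 2) := by
    intro i
    induction i with
    | zero => intro X hX; simp [dropIter]
    | succ n ih =>
      intro X hX
      have hstep : dropIter (n + 1) X = dropIter n (dropMin X) := by
        rw [dropIter, dropIter, Function.iterate_succ, Function.comp_apply]
      rw [hstep, ih (dropMin X) (dropMin_infinite hX)]
      have hne := hAlt X hX
      have hflip : fbar (dropMin X) = fbar X + 1 := by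
        have : ∀ a b : Fin 2, a ≠ b → b = a + 1 := by decide
        exact this _ _ hne
      rw [hflip]
      push_cast
      abel
  have hdi1 : dropIter j (↑s ∪ Z) = Z := dropIter_union s Z hZinf habove1
  have hdi2 : dropIter j (↑s ∪ dropMin Z) = dropMin Z :=
    dropIter_union s (dropMin Z) hZ'inf habove2
  open Fin.NatCast in
  have e1 : fbar Z = f s + (j : Fin 2) := by
    rw [← hdi1, hiter j _ (hZinf.mono Set.subset_union_right), hV]
  open Fin.NatCast in
  have e2 : fbar (dropMin Z) = f s + (j : Fin 2) := by
    rw [← hdi2, hiter j _ (hZ'inf.mono Set.subset_union_right), hW]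
  exact hAlt Z hZinf (e1.trans e2.symm)
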